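/- Let λ ≠ 0 be a real number and let A be the fuzzy sphere: the associative unital ℂ-algebra generated by x₁, x₂, x₃ subject to the relations x_i x_j − x_j x_i = 2iλ·Σ_k ε_{ijk} x_k (ε the Levi-Civita symbol) and x₁² + x₂² + x₃² = 1 − λ². Let l ≥ 0 be an integer and let f : (Fin l → Fin 3) → ℂ be totally symmetric (invariant under precomposition with every permutation of the l slots) and traceless (for each pair of slots a ≠ b and each choice of the remaining indices, Σ_{c=1}^{3} f evaluated with slots a and b both equal to c vanishes). Set v = Σ_{i : Fin l → Fin 3} f(i)·x_{i(1)}·x_{i(2)}⋯x_{i(l)} ∈ A. Then Σ_{k=1}^{3} [x_k, [x_k, v]] = 4λ²·l(l+1)·v; equivalently, with ∂_k := (2iλ)^{−1}[x_k, −], the element v is an eigenvector of Σ_k ∂_k² with eigenvalue −l(l+1). -/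
import Mathlib


noncomputable section

/-- The Levi-Civita symbol on `Fin 3`. -/
def eps (i j k : Fin 3) : ℤ :=
  ((j.val : ℤ) - (i.val : ℤ)) * ((k.val : ℤ) - (i.val : ℤ)) * ((k.val : ℤ) - (j.val : ℤ)) / 2

/-- The defining relations of the fuzzy sphere `ℂ_λ[S²]`:
`x_i x_j - x_j x_i = 2iλ Σ_k ε_{ijk} x_k` and `Σ_i x_i² = 1 - λ²`. -/
inductive FuzzyRel (lam : ℝ) : FreeAlgebra ℂ (Fin 3) → FreeAlgebra ℂ (Fin 3) → Prop
  | comm (i j : Fin 3) :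
      FuzzyRel lam
        (FreeAlgebra.ι ℂ i * FreeAlgebra.ι ℂ j - FreeAlgebra.ι ℂ j * FreeAlgebra.ι ℂ i)
        (∑ k : Fin 3, (2 * (lam : ℂ) * Complex.I * ((eps i j k : ℤ) : ℂ)) • FreeAlgebra.ι ℂ k)
  | radius :
      FuzzyRel lam (∑ i : Fin 3, FreeAlgebra.ι ℂ i * FreeAlgebra.ι ℂ i)
        (algebraMap ℂ (FreeAlgebra ℂ (Fin 3)) (1 - (lam : ℂ) ^ 2))

/-- The fuzzy sphere: the associative unital ℂ-algebra generated by `x₁, x₂, x₃`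
subject to the relations above. -/
abbrev FuzzySphere (lam : ℝ) := RingQuot (FuzzyRel lam)

/-- The generators `x_i` of the fuzzy sphere. -/
def fx (lam : ℝ) (i : Fin 3) : FuzzySphere lam :=
  RingQuot.mkAlgHom ℂ (FuzzyRel lam) (FreeAlgebra.ι ℂ i)

namespace FuzzyAux

open Complex Finset

def cc (lam : ℝ) (k j m : Fin 3) : ℂ := 2 * (lam : ℂ) * Complex.I * ((eps k j m : ℤ) : ℂ)

lemma comm_rel (lam : ℝ) (i j : Fin 3) :
    fx lam i * fx lam j - fx lam j * fx lam i = ∑ k, cc lam i j k • fx lam k := by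
  have h := RingQuot.mkAlgHom_rel ℂ (FuzzyRel.comm (lam := lam) i j)
  simp only [map_sub, map_mul, map_sum, map_smul] at h
  simpa [fx, cc] using h

def ad (lam : ℝ) (k : Fin 3) : FuzzySphere lam →ₗ[ℂ] FuzzySphere lam :=
  LinearMap.mulLeft ℂ (fx lam k) - LinearMap.mulRight ℂ (fx lam k)

lemma ad_apply (lam : ℝ) (k : Fin 3) (v : FuzzySphere lam) :
    ad lam k v = fx lam k * v - v * fx lam k := rfl

lemma ad_mul (lam : ℝ) (k : Fin 3) (u w : FuzzySphere lam) :
    ad lam k (u * w) = ad lam k u * w + u * ad lam k w := by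
  simp only [ad_apply, sub_mul, mul_sub, mul_assoc]
  abel

lemma ad_X (lam : ℝ) (k j : Fin 3) :
    ad lam k (fx lam j) = ∑ m, cc lam k j m • fx lam m := by
  rw [ad_apply]; exact comm_rel lam k j

end FuzzyAux

namespace FuzzyAux
open Complex Finset

def Mn (lam : ℝ) (l : ℕ) (i : Fin l → Fin 3) : FuzzySphere lam :=
  (List.ofFn fun t => fx lam (i t)).prod

lemma Mn_zero (lam : ℝ) (i : Fin 0 → Fin 3) : Mn lam 0 i = 1 := by simp [Mn]

lemma Mn_succ (lam : ℝ) (l : ℕ) (i : Fin (l+1) → Fin 3) :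
    Mn lam (l+1) i = fx lam (i 0) * Mn lam l (i ∘ Fin.succ) := by
  simp [Mn, List.ofFn_succ, Function.comp]

lemma ad_Mn (lam : ℝ) (k : Fin 3) : ∀ (l : ℕ) (i : Fin l → Fin 3),
    ad lam k (Mn lam l i) =
      ∑ a : Fin l, ∑ m : Fin 3, cc lam k (i a) m • Mn lam l (Function.update i a m) := by
  intro l
  induction l with
  | zero => intro i; simp [Mn_zero, ad_apply]
  | succ l ih =>
    intro i
    have h0 : ∀ m : Fin 3, Mn lam (l+1) (Function.update i 0 m)
        = fx lam m * Mn lam l (i ∘ Fin.succ) := by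
      intro m
      rw [Mn_succ]
      have e1 : Function.update i 0 m 0 = m := Function.update_self _ _ _
      have e2 : (Function.update i 0 m) ∘ Fin.succ = i ∘ Fin.succ := by
        funext t
        exact Function.update_of_ne (Fin.succ_ne_zero t) _ _
      rw [e1, e2]
    have h1 : ∀ (a : Fin l) (m : Fin 3), Mn lam (l+1) (Function.update i a.succ m)
        = fx lam (i 0) * Mn lam l (Function.update (i ∘ Fin.succ) a m) := by
      intro a m
      rw [Mn_succ, Function.update_of_ne (Fin.succ_ne_zero a).symm]
      exact congrArg (fun g => fx lam (i 0) * Mn lam l g)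
        (Function.update_comp_eq_of_injective _ (Fin.succ_injective l) _ _)
    rw [Mn_succ, ad_mul, ad_X, ih]
    conv_rhs => rw [Fin.sum_univ_succ (f := fun a : Fin (l+1) => ∑ m : Fin 3, cc lam k (i a) m • Mn lam (l+1) (Function.update i a m))]
    congr 1
    · rw [Finset.sum_mul]
      refine Finset.sum_congr rfl fun m _ => ?_
      rw [smul_mul_assoc, h0]
    · rw [Finset.mul_sum]
      refine Finset.sum_congr rfl fun a _ => ?_
      rw [Finset.mul_sum]
      refine Finset.sum_congr rfl fun m _ => ?_
      rw [mul_smul_comm, h1]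
      simp [Function.comp]
end FuzzyAux


namespace FuzzyAux
open Complex Finset

lemma eps_id1 : ∀ j n : Fin 3, (∑ m : Fin 3, ∑ k : Fin 3, eps k j m * eps k m n)
    = if j = n then -2 else 0 := by decide

lemma eps_id2 : ∀ j m j' n : Fin 3, (∑ k : Fin 3, eps k j m * eps k j' n)
    = (if j = j' then 1 else 0) * (if m = n then 1 else 0)
      - (if j = n then 1 else 0) * (if m = j' then 1 else 0) := by decide

lemma csum1 (lam : ℝ) (j n : Fin 3) :
    (∑ m : Fin 3, ∑ k : Fin 3, cc lam k j m * cc lam k m n)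
      = if j = n then (8 * (lam : ℂ) ^ 2) else 0 := by
  have h : (∑ m : Fin 3, ∑ k : Fin 3, cc lam k j m * cc lam k m n)
      = (2 * (lam : ℂ) * Complex.I) ^ 2
        * (((∑ m : Fin 3, ∑ k : Fin 3, eps k j m * eps k m n : ℤ)) : ℂ) := by
    push_cast
    rw [Finset.mul_sum]
    refine Finset.sum_congr rfl fun m _ => ?_
    rw [Finset.mul_sum]
    refine Finset.sum_congr rfl fun k _ => ?_
    simp only [cc]; push_cast; ring
  rw [h, eps_id1 j n]
  split_ifs
  · push_cast
    rw [mul_pow, mul_pow, Complex.I_sq]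
    push_cast; ring
  · simp

lemma csum2 (lam : ℝ) (j m j' n : Fin 3) :
    (∑ k : Fin 3, cc lam k j m * cc lam k j' n)
      = (if j = n ∧ m = j' then (4 * (lam : ℂ) ^ 2) else 0)
        - (if j = j' ∧ m = n then (4 * (lam : ℂ) ^ 2) else 0) := by
  have h : (∑ k : Fin 3, cc lam k j m * cc lam k j' n)
      = (2 * (lam : ℂ) * Complex.I) ^ 2
        * (((∑ k : Fin 3, eps k j m * eps k j' n : ℤ)) : ℂ) := by
    push_cast
    rw [Finset.mul_sum]
    refine Finset.sum_congr rfl fun k _ => ?_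
    simp only [cc]; push_cast; ring
  rw [h, eps_id2]
  simp only [mul_pow, Complex.I_sq]
  split_ifs <;> (try tauto) <;> push_cast <;> ring


end FuzzyAux

namespace FuzzyAux
open Complex Finset

lemma sum_pair_swap {M : Type*} [AddCommMonoid M] [Module ℂ M]
    (C : ℂ) (p q : Fin 3) (T : Fin 3 → Fin 3 → M) :
    (∑ m : Fin 3, ∑ n : Fin 3, (if p = n ∧ m = q then C else 0) • T m n) = C • T q p := by
  simp [ite_and, ite_smul, Finset.sum_ite_eq, Finset.sum_ite_eq']

lemma sum_pair_diag {M : Type*} [AddCommMonoid M] [Module ℂ M]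
    (C : ℂ) (p q : Fin 3) (T : Fin 3 → Fin 3 → M) :
    (∑ m : Fin 3, ∑ n : Fin 3, (if p = q ∧ m = n then C else 0) • T m n)
      = if p = q then ∑ m : Fin 3, C • T m m else 0 := by
  split_ifs with h
  · simp [h, ite_smul, Finset.sum_ite_eq']
  · simp [h]

lemma traceZero (lam : ℝ) (l : ℕ) (f : (Fin l → Fin 3) → ℂ)
    (htrace : ∀ a b : Fin l, a ≠ b → ∀ i : Fin l → Fin 3,
      ∑ c : Fin 3, f (Function.update (Function.update i a c) b c) = 0)
    (a b : Fin l) (hab : a ≠ b) (C : ℂ) :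
    (∑ i : Fin l → Fin 3, f i •
      (if i a = i b then
        ∑ m : Fin 3, C • Mn lam l (Function.update (Function.update i a m) b m) else 0)) = 0 := by
  classical
  have e1 : ∀ i : Fin l → Fin 3, f i •
      (if i a = i b then
        ∑ m : Fin 3, C • Mn lam l (Function.update (Function.update i a m) b m) else 0)
      = ∑ m : Fin 3, (if i a = i b then
          (C * f i) • Mn lam l (Function.update (Function.update i a m) b m) else 0) := by
    intro i
    split_ifs with h
    · rw [Finset.smul_sum]
      refine Finset.sum_congr rfl fun m _ => ?_
      rw [smul_smul, mul_comm (f i) C]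
    · simp
  simp only [e1]
  rw [← Finset.sum_product']
  rw [← Finset.sum_filter]
  rw [Finset.sum_nbij'
      (i := fun p : (Fin l → Fin 3) × Fin 3 =>
        ((Function.update (Function.update p.1 a p.2) b p.2, p.1 a) : (Fin l → Fin 3) × Fin 3))
      (j := fun q : (Fin l → Fin 3) × Fin 3 =>
        ((Function.update (Function.update q.1 a q.2) b q.2, q.1 a) : (Fin l → Fin 3) × Fin 3))
      (t := Finset.filter (fun q : (Fin l → Fin 3) × Fin 3 => q.1 a = q.1 b)
        (Finset.univ ×ˢ Finset.univ))
      (g := fun q : (Fin l → Fin 3) × Fin 3 =>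
        (C * f (Function.update (Function.update q.1 a q.2) b q.2)) • Mn lam l q.1)
      ?_ ?_ ?_ ?_ ?_]
  · rw [Finset.sum_filter, Finset.sum_product]
    refine Finset.sum_eq_zero fun i _ => ?_
    by_cases h : i a = i b
    · simp only [h, if_true]
      rw [← Finset.sum_smul]
      rw [show (∑ m : Fin 3, C * f (Function.update (Function.update i a m) b m))
          = C * ∑ m : Fin 3, f (Function.update (Function.update i a m) b m) by
          rw [Finset.mul_sum]]
      rw [htrace a b hab i, mul_zero, zero_smul]
    · simp [h]
  · intro p hp
    simp only [Finset.mem_filter, Finset.mem_product, Finset.mem_univ, true_and] at hp ⊢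
    rw [Function.update_of_ne hab, Function.update_self, Function.update_self]
  · intro q hq
    simp only [Finset.mem_filter, Finset.mem_product, Finset.mem_univ, true_and] at hq ⊢
    rw [Function.update_of_ne hab, Function.update_self, Function.update_self]
  · intro p hp
    simp only [Finset.mem_filter, Finset.mem_product, Finset.mem_univ, true_and] at hp
    dsimp only
    have h1 : Function.update (Function.update
        (Function.update (Function.update p.1 a p.2) b p.2) a (p.1 a)) b (p.1 a) = p.1 := by
      funext t
      simp only [Function.update_apply]
      split_ifs <;> simp_all
    have h2 : Function.update (Function.update p.1 a p.2) b p.2 a = p.2 := by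
      rw [Function.update_of_ne hab, Function.update_self]
    exact Prod.ext h1 h2
  · intro q hq
    simp only [Finset.mem_filter, Finset.mem_product, Finset.mem_univ, true_and] at hq
    dsimp only
    have h1 : Function.update (Function.update
        (Function.update (Function.update q.1 a q.2) b q.2) a (q.1 a)) b (q.1 a) = q.1 := by
      funext t
      simp only [Function.update_apply]
      split_ifs <;> simp_all
    have h2 : Function.update (Function.update q.1 a q.2) b q.2 a = q.2 := by
      rw [Function.update_of_ne hab, Function.update_self]
    exact Prod.ext h1 h2
  · intro p hp
    simp only [Finset.mem_filter, Finset.mem_product, Finset.mem_univ, true_and] at hp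
    dsimp only
    have key : Function.update (Function.update
        (Function.update (Function.update p.1 a p.2) b p.2) a (p.1 a)) b (p.1 a) = p.1 := by
      funext t
      simp only [Function.update_apply]
      split_ifs <;> simp_all
    rw [key]

end FuzzyAux

namespace FuzzyAux
open Complex Finset

lemma swap_eq (l : ℕ) (a b : Fin l) (hab : a ≠ b) (i : Fin l → Fin 3) :
    Function.update (Function.update i a (i b)) b (i a) = i ∘ (Equiv.swap a b) := by
  funext t
  simp only [Function.comp, Function.update_apply, Equiv.swap_apply_def]
  split_ifs <;> simp_all

lemma swapSum (lam : ℝ) (l : ℕ) (f : (Fin l → Fin 3) → ℂ)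
    (hsym : ∀ (σ : Equiv.Perm (Fin l)) (i : Fin l → Fin 3), f (i ∘ σ) = f i)
    (a b : Fin l) :
    (∑ i : Fin l → Fin 3, f i • Mn lam l (i ∘ (Equiv.swap a b)))
      = ∑ i : Fin l → Fin 3, f i • Mn lam l i := by
  have hbij : Function.Bijective
      (fun i : Fin l → Fin 3 => i ∘ (Equiv.swap a b : Equiv.Perm (Fin l))) := by
    apply Function.Involutive.bijective
    intro i; funext t
    simp [Function.comp]
  exact Fintype.sum_bijective _ hbij _ _
    (fun i => by rw [hsym (Equiv.swap a b) i])

lemma cross (lam : ℝ) (l : ℕ) (f : (Fin l → Fin 3) → ℂ)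
    (hsym : ∀ (σ : Equiv.Perm (Fin l)) (i : Fin l → Fin 3), f (i ∘ σ) = f i)
    (htrace : ∀ a b : Fin l, a ≠ b → ∀ i : Fin l → Fin 3,
      ∑ c : Fin 3, f (Function.update (Function.update i a c) b c) = 0)
    (a b : Fin l) (hab : a ≠ b) :
    (∑ i : Fin l → Fin 3, f i •
        ∑ m : Fin 3, ∑ n : Fin 3,
          (∑ k : Fin 3, cc lam k (i a) m * cc lam k (i b) n) •
            Mn lam l (Function.update (Function.update i a m) b n))
      = (4 * (lam : ℂ) ^ 2) • ∑ i : Fin l → Fin 3, f i • Mn lam l i := by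
  have inner : ∀ i : Fin l → Fin 3,
      (∑ m : Fin 3, ∑ n : Fin 3,
          (∑ k : Fin 3, cc lam k (i a) m * cc lam k (i b) n) •
            Mn lam l (Function.update (Function.update i a m) b n))
      = (4 * (lam : ℂ) ^ 2) •
            Mn lam l (Function.update (Function.update i a (i b)) b (i a))
        - (if i a = i b then ∑ m : Fin 3, (4 * (lam : ℂ) ^ 2) •
            Mn lam l (Function.update (Function.update i a m) b m) else 0) := by
    intro i
    have hsub : ∀ (c d : ℂ) (x : FuzzySphere lam), (c - d) • x = c • x - d • x :=
      fun c d x => sub_smul c d x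
    simp only [csum2, hsub, Finset.sum_sub_distrib]
    rw [sum_pair_swap (4 * (lam : ℂ) ^ 2) (i a) (i b)
        (fun m n => Mn lam l (Function.update (Function.update i a m) b n)),
      sum_pair_diag (4 * (lam : ℂ) ^ 2) (i a) (i b)
        (fun m n => Mn lam l (Function.update (Function.update i a m) b n))]
  simp only [inner, smul_sub]
  rw [Finset.sum_sub_distrib, traceZero lam l f htrace a b hab, sub_zero]
  have e2 : ∀ i : Fin l → Fin 3,
      f i • ((4 * (lam : ℂ) ^ 2) •
        Mn lam l (Function.update (Function.update i a (i b)) b (i a)))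
      = (4 * (lam : ℂ) ^ 2) • (f i • Mn lam l (i ∘ (Equiv.swap a b))) := by
    intro i
    rw [swap_eq l a b hab, smul_comm]
  simp only [e2]
  rw [← Finset.smul_sum, swapSum lam l f hsym a b]

end FuzzyAux

namespace FuzzyAux
open Complex Finset

lemma W_eq (lam : ℝ) (l : ℕ) (i : Fin l → Fin 3) :
    (∑ k : Fin 3, ad lam k (ad lam k (Mn lam l i)))
      = ((l : ℂ) * (8 * (lam : ℂ) ^ 2)) • Mn lam l i
        + ∑ a : Fin l, ∑ b ∈ Finset.univ \ {a}, ∑ m : Fin 3, ∑ n : Fin 3,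
            (∑ k : Fin 3, cc lam k (i a) m * cc lam k (i b) n) •
              Mn lam l (Function.update (Function.update i a m) b n) := by
  have step1 : ∀ k : Fin 3, ad lam k (ad lam k (Mn lam l i))
      = ∑ a : Fin l, ∑ m : Fin 3, ∑ b : Fin l, ∑ n : Fin 3,
          (cc lam k (i a) m * cc lam k (Function.update i a m b) n) •
            Mn lam l (Function.update (Function.update i a m) b n) := by
    intro k
    rw [ad_Mn, map_sum]
    refine Finset.sum_congr rfl fun a _ => ?_
    rw [map_sum]
    refine Finset.sum_congr rfl fun m _ => ?_
    rw [map_smul, ad_Mn, Finset.smul_sum]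
    refine Finset.sum_congr rfl fun b _ => ?_
    rw [Finset.smul_sum]
    refine Finset.sum_congr rfl fun n _ => ?_
    rw [smul_smul]
  have step2 : (∑ k : Fin 3, ad lam k (ad lam k (Mn lam l i)))
      = ∑ a : Fin l, ∑ m : Fin 3, ∑ b : Fin l, ∑ n : Fin 3,
          (∑ k : Fin 3, cc lam k (i a) m * cc lam k (Function.update i a m b) n) •
            Mn lam l (Function.update (Function.update i a m) b n) := by
    simp only [step1]
    rw [Finset.sum_comm]
    refine Finset.sum_congr rfl fun a _ => ?_
    rw [Finset.sum_comm]
    refine Finset.sum_congr rfl fun m _ => ?_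
    rw [Finset.sum_comm]
    refine Finset.sum_congr rfl fun b _ => ?_
    rw [Finset.sum_comm]
    refine Finset.sum_congr rfl fun n _ => ?_
    exact Finset.sum_smul.symm
  rw [step2]
  have per_a : ∀ a : Fin l,
      (∑ m : Fin 3, ∑ b : Fin l, ∑ n : Fin 3,
        (∑ k : Fin 3, cc lam k (i a) m * cc lam k (Function.update i a m b) n) •
          Mn lam l (Function.update (Function.update i a m) b n))
      = (8 * (lam : ℂ) ^ 2) • Mn lam l i
        + ∑ b ∈ Finset.univ \ {a}, ∑ m : Fin 3, ∑ n : Fin 3,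
            (∑ k : Fin 3, cc lam k (i a) m * cc lam k (i b) n) •
              Mn lam l (Function.update (Function.update i a m) b n) := by
    intro a
    have hb_split : ∀ m : Fin 3,
        (∑ b : Fin l, ∑ n : Fin 3,
          (∑ k : Fin 3, cc lam k (i a) m * cc lam k (Function.update i a m b) n) •
            Mn lam l (Function.update (Function.update i a m) b n))
        = (∑ n : Fin 3, (∑ k : Fin 3, cc lam k (i a) m * cc lam k m n) •
              Mn lam l (Function.update i a n))
          + ∑ b ∈ Finset.univ \ {a}, ∑ n : Fin 3,
              (∑ k : Fin 3, cc lam k (i a) m * cc lam k (i b) n) •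
                Mn lam l (Function.update (Function.update i a m) b n) := by
      intro m
      rw [Finset.sum_eq_sum_sdiff_singleton_add (Finset.mem_univ a), add_comm]
      congr 1
      · refine Finset.sum_congr rfl fun n _ => ?_
        rw [Function.update_self, Function.update_idem]
      · refine Finset.sum_congr rfl fun b hb => ?_
        have hba : b ≠ a := by
          rcases Finset.mem_sdiff.mp hb with ⟨-, h2⟩
          simpa using h2
        refine Finset.sum_congr rfl fun n _ => ?_
        rw [Function.update_of_ne hba]
    simp only [hb_split]
    rw [Finset.sum_add_distrib]
    congr 1
    · rw [Finset.sum_comm]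
      have hcol : ∀ n : Fin 3,
          (∑ m : Fin 3, (∑ k : Fin 3, cc lam k (i a) m * cc lam k m n) •
              Mn lam l (Function.update i a n))
          = (if i a = n then (8 * (lam : ℂ) ^ 2) • Mn lam l (Function.update i a n) else 0) := by
        intro n
        have hs : (∑ m : Fin 3, ∑ k : Fin 3, cc lam k (i a) m * cc lam k m n) •
            Mn lam l (Function.update i a n)
            = ∑ m : Fin 3, (∑ k : Fin 3, cc lam k (i a) m * cc lam k m n) •
              Mn lam l (Function.update i a n) := Finset.sum_smul
        rw [← hs, csum1]
        split_ifs <;> simp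
      simp only [hcol]
      rw [Finset.sum_ite_eq]
      simp [Function.update_eq_self]
    · rw [Finset.sum_comm]
  simp only [per_a]
  rw [Finset.sum_add_distrib]
  congr 1
  rw [Finset.sum_const, Finset.card_univ, Fintype.card_fin,
    ← Nat.cast_smul_eq_nsmul ℂ l ((8 * (lam : ℂ) ^ 2) • Mn lam l i), smul_smul]

end FuzzyAux


/-- For `f` totally symmetric and traceless and
`v = Σ_i f(i) x_{i(1)} ⋯ x_{i(l)}`, we have `Σ_k [x_k,[x_k,v]] = 4λ² l(l+1) v`,
i.e. `v` is an eigenvector of `Σ_k ∂_k²` (where `∂_k = (2iλ)⁻¹ [x_k, -]`) with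
eigenvalue `-l(l+1)`. -/
theorem stmt1 (lam : ℝ) (hlam : lam ≠ 0) (l : ℕ)
    (f : (Fin l → Fin 3) → ℂ)
    (hsym : ∀ (σ : Equiv.Perm (Fin l)) (i : Fin l → Fin 3), f (i ∘ σ) = f i)
    (htrace : ∀ a b : Fin l, a ≠ b → ∀ i : Fin l → Fin 3,
      ∑ c : Fin 3, f (Function.update (Function.update i a c) b c) = 0)
    (v : FuzzySphere lam)
    (hv : v = ∑ i : Fin l → Fin 3, f i • (List.ofFn fun k : Fin l => fx lam (i k)).prod) :
    ∑ k : Fin 3,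
        (fx lam k * (fx lam k * v - v * fx lam k) - (fx lam k * v - v * fx lam k) * fx lam k)
      = ((4 * lam ^ 2 * (l * (l + 1)) : ℝ) : ℂ) • v := by
  classical
  have hA : ∀ k : Fin 3,
      fx lam k * (fx lam k * v - v * fx lam k) - (fx lam k * v - v * fx lam k) * fx lam k
        = FuzzyAux.ad lam k (FuzzyAux.ad lam k v) := fun k => rfl
  simp only [hA]
  subst hv
  have hM : (∑ i : Fin l → Fin 3, f i • (List.ofFn fun k : Fin l => fx lam (i k)).prod)
      = ∑ i : Fin l → Fin 3, f i • FuzzyAux.Mn lam l i := rfl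
  rw [hM]
  have hpush : (∑ k : Fin 3, FuzzyAux.ad lam k (FuzzyAux.ad lam k
        (∑ i : Fin l → Fin 3, f i • FuzzyAux.Mn lam l i)))
      = ∑ i : Fin l → Fin 3, f i •
          (∑ k : Fin 3, FuzzyAux.ad lam k (FuzzyAux.ad lam k (FuzzyAux.Mn lam l i))) := by
    simp only [map_sum, map_smul]
    rw [Finset.sum_comm]
    exact Finset.sum_congr rfl fun i _ => (Finset.smul_sum).symm
  rw [hpush]
  simp only [FuzzyAux.W_eq lam l]
  simp only [smul_add]
  rw [Finset.sum_add_distrib]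
  have h1 : (∑ i : Fin l → Fin 3, f i • (((l : ℂ) * (8 * (lam : ℂ) ^ 2)) • FuzzyAux.Mn lam l i))
      = ((l : ℂ) * (8 * (lam : ℂ) ^ 2)) • ∑ i : Fin l → Fin 3, f i • FuzzyAux.Mn lam l i := by
    rw [Finset.smul_sum]
    exact Finset.sum_congr rfl fun i _ => smul_comm _ _ _
  have h2 : (∑ i : Fin l → Fin 3, f i •
        ∑ a : Fin l, ∑ b ∈ Finset.univ \ {a}, ∑ m : Fin 3, ∑ n : Fin 3,
          (∑ k : Fin 3, FuzzyAux.cc lam k (i a) m * FuzzyAux.cc lam k (i b) n) •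
            FuzzyAux.Mn lam l (Function.update (Function.update i a m) b n))
      = (l * (l - 1) : ℕ) • ((4 * (lam : ℂ) ^ 2) •
          ∑ i : Fin l → Fin 3, f i • FuzzyAux.Mn lam l i) := by
    have hstep : ∀ i : Fin l → Fin 3,
        (f i • ∑ a : Fin l, ∑ b ∈ Finset.univ \ {a}, ∑ m : Fin 3, ∑ n : Fin 3,
          (∑ k : Fin 3, FuzzyAux.cc lam k (i a) m * FuzzyAux.cc lam k (i b) n) •
            FuzzyAux.Mn lam l (Function.update (Function.update i a m) b n))
        = ∑ a : Fin l, ∑ b ∈ Finset.univ \ {a},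
            f i • ∑ m : Fin 3, ∑ n : Fin 3,
              (∑ k : Fin 3, FuzzyAux.cc lam k (i a) m * FuzzyAux.cc lam k (i b) n) •
                FuzzyAux.Mn lam l (Function.update (Function.update i a m) b n) := by
      intro i
      rw [Finset.smul_sum]
      exact Finset.sum_congr rfl fun a _ => Finset.smul_sum
    simp only [hstep]
    rw [Finset.sum_comm]
    have hab : ∀ a : Fin l,
        (∑ i : Fin l → Fin 3, ∑ b ∈ Finset.univ \ {a},
          f i • ∑ m : Fin 3, ∑ n : Fin 3,
            (∑ k : Fin 3, FuzzyAux.cc lam k (i a) m * FuzzyAux.cc lam k (i b) n) •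
              FuzzyAux.Mn lam l (Function.update (Function.update i a m) b n))
        = (l - 1 : ℕ) • ((4 * (lam : ℂ) ^ 2) •
            ∑ i : Fin l → Fin 3, f i • FuzzyAux.Mn lam l i) := by
      intro a
      rw [Finset.sum_comm]
      have hone : ∀ b ∈ Finset.univ \ ({a} : Finset (Fin l)),
          (∑ i : Fin l → Fin 3, f i • ∑ m : Fin 3, ∑ n : Fin 3,
            (∑ k : Fin 3, FuzzyAux.cc lam k (i a) m * FuzzyAux.cc lam k (i b) n) •
              FuzzyAux.Mn lam l (Function.update (Function.update i a m) b n))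
          = (4 * (lam : ℂ) ^ 2) • ∑ i : Fin l → Fin 3, f i • FuzzyAux.Mn lam l i := by
        intro b hb
        have hba : a ≠ b := by
          rcases Finset.mem_sdiff.mp hb with ⟨-, h2⟩
          simp only [Finset.mem_singleton] at h2
          exact fun h => h2 h.symm
        exact FuzzyAux.cross lam l f hsym htrace a b hba
      rw [Finset.sum_congr rfl hone, Finset.sum_const, Finset.card_sdiff_of_subset
        (Finset.subset_univ _), Finset.card_univ, Fintype.card_fin, Finset.card_singleton]
    rw [Finset.sum_congr rfl (fun a _ => hab a), Finset.sum_const, Finset.card_univ,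
      Fintype.card_fin, ← mul_smul]
  rw [h1, h2, ← Nat.cast_smul_eq_nsmul ℂ (l * (l - 1)), smul_smul, ← add_smul]
  congr 1
  rcases l with _ | l'
  · push_cast; ring
  · push_cast [Nat.succ_sub_one]; ring
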